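/- Let F : ℝ^n → ℝ be differentiable and bounded below with F* = inf_θ F(θ) > −∞, let θ : [0, ∞) → ℝ^n be differentiable with s ↦ ‖θ'(s)‖² integrable on each [0, t], let α : [0, ∞) → [0, ∞) be measurable with B = sup_{s≥0} α(s) < ∞ and A = (∫_0^∞ α(s)^γ ds)^{1/γ} < ∞ for some γ ≥ 1, let g_ε ≥ 0, c ≥ 0, and suppose for all s ≥ 0: (d/ds) F(θ(s)) ≤ −‖θ'(s)‖² + α(s)(α(s) g_ε + c √g_ε). Then for every t > 0, inf_{s ∈ [0,t]} ‖θ'(s)‖² ≤ (F(θ(0)) − F*)/t + max(g_ε, c √g_ε) · (B + 1) · A · t^{−1/γ}. -/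

import Mathlib

open MeasureTheory Set


/-- summable-control case of Theorem 4: with
`A = (∫₀^∞ α^γ)^{1/γ} < ∞`, `α ≤ B` on `[0,∞)`, and
`(d/ds) F(θ(s)) ≤ -‖θ'(s)‖² + α(s)(α(s) g_ε + c √g_ε)` for all `s ≥ 0`,
`inf_{s∈[0,t]} ‖θ'(s)‖² ≤ (F(θ 0) - F*)/t + max(g_ε, c√g_ε)(B+1) A t^{-1/γ}`. -/
theorem stmt_11 {n : ℕ} (F : EuclideanSpace ℝ (Fin n) → ℝ)
    (hFdiff : Differentiable ℝ F) (hFbdd : BddBelow (Set.range F))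
    (θ : ℝ → EuclideanSpace ℝ (Fin n)) (hθ : Differentiable ℝ θ)
    (hvint : ∀ t : ℝ,
      IntervalIntegrable (fun s => ‖deriv θ s‖ ^ 2) MeasureTheory.volume 0 t)
    (α : ℝ → ℝ) (hαmeas : Measurable α) (hα0 : ∀ s, 0 ≤ α s)
    (γ : ℝ) (hγ : 1 ≤ γ)
    (hαint : MeasureTheory.IntegrableOn (fun s => α s ^ γ) (Set.Ioi (0 : ℝ)))
    (A B gε c : ℝ) (hgε : 0 ≤ gε) (hc : 0 ≤ c)
    (hA : A = (∫ s in Set.Ioi (0 : ℝ), α s ^ γ) ^ (1 / γ))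
    (hB : ∀ s : ℝ, 0 ≤ s → α s ≤ B)
    (hderiv : ∀ s : ℝ, 0 ≤ s →
      deriv (fun u => F (θ u)) s ≤
        -‖deriv θ s‖ ^ 2 + α s * (α s * gε + c * Real.sqrt gε))
    (t : ℝ) (ht : 0 < t) :
    (⨅ s : Set.Icc (0 : ℝ) t, ‖deriv θ ↑s‖ ^ 2) ≤
      (F (θ 0) - ⨅ x, F x) / t +
        max gε (c * Real.sqrt gε) * (B + 1) * A * t ^ (-(1 / γ)) := by
  have hγ0 : 0 < γ := lt_of_lt_of_le one_pos hγ
  set M := max gε (c * Real.sqrt gε) with hMdef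
  have hM0 : 0 ≤ M := le_max_of_le_left hgε
  have hB0 : 0 ≤ B := le_trans (hα0 0) (hB 0 le_rfl)
  set m := (⨅ s : Set.Icc (0 : ℝ) t, ‖deriv θ ↑s‖ ^ 2) with hmdef
  -- infimum facts
  have hbdd : BddBelow (Set.range fun s : Set.Icc (0 : ℝ) t => ‖deriv θ ↑s‖ ^ 2) := by
    refine ⟨0, ?_⟩
    rintro x ⟨s, rfl⟩
    positivity
  have hm_le : ∀ s ∈ Set.Icc (0 : ℝ) t, m ≤ ‖deriv θ s‖ ^ 2 := fun s hs =>
    ciInf_le hbdd (⟨s, hs⟩ : Set.Icc (0 : ℝ) t)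
  -- integrability of the control term
  set f2 : ℝ → ℝ := fun s => α s * (α s * gε + c * Real.sqrt gε) with hf2def
  have hf2meas : Measurable f2 := (hαmeas.mul ((hαmeas.mul_const gε).add_const _))
  have hf2int : IntegrableOn f2 (Set.Icc (0 : ℝ) t) := by
    apply Measure.integrableOn_of_bounded (M := B * (B * gε + c * Real.sqrt gε))
      (by simp) hf2meas.aestronglyMeasurable
    filter_upwards [ae_restrict_mem measurableSet_Icc] with s hs
    have h1 : α s ≤ B := hB s hs.1
    have h2 : 0 ≤ α s := hα0 s
    have h3 : 0 ≤ Real.sqrt gε := Real.sqrt_nonneg _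
    rw [Real.norm_eq_abs, abs_of_nonneg (by positivity)]
    show α s * (α s * gε + c * Real.sqrt gε) ≤ B * (B * gε + c * Real.sqrt gε)
    have h4 : α s * gε + c * Real.sqrt gε ≤ B * gε + c * Real.sqrt gε := by nlinarith
    have h5 : 0 ≤ α s * gε + c * Real.sqrt gε := by positivity
    calc α s * (α s * gε + c * Real.sqrt gε) ≤ B * (α s * gε + c * Real.sqrt gε) :=
          mul_le_mul_of_nonneg_right h1 h5
      _ ≤ B * (B * gε + c * Real.sqrt gε) := mul_le_mul_of_nonneg_left h4 hB0
  have hf1int : IntegrableOn (fun s => ‖deriv θ s‖ ^ 2) (Set.Icc (0 : ℝ) t) := by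
    rw [integrableOn_Icc_iff_integrableOn_Ioc]
    exact (intervalIntegrable_iff_integrableOn_Ioc_of_le ht.le).mp (hvint t)
  have hφint : IntegrableOn (fun s => -‖deriv θ s‖ ^ 2 + f2 s) (Set.Icc (0 : ℝ) t) :=
    hf1int.neg.add hf2int
  -- FTC inequality
  have hcont : ContinuousOn (fun u => F (θ u)) (Set.Icc (0 : ℝ) t) :=
    ((hFdiff.comp hθ).continuous).continuousOn
  have hderiv' : ∀ x ∈ Set.Ioo (0 : ℝ) t,
      HasDerivWithinAt (fun u => F (θ u)) (deriv (fun u => F (θ u)) x) (Set.Ioi x) x :=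
    fun x _ => ((hFdiff.comp hθ) x).hasDerivAt.hasDerivWithinAt
  have key : F (θ t) - F (θ 0) ≤ ∫ y in (0:ℝ)..t, (-‖deriv θ y‖ ^ 2 + f2 y) :=
    intervalIntegral.sub_le_integral_of_hasDeriv_right_of_le ht.le hcont hderiv' hφint
      (fun x hx => hderiv x hx.1.le)
  -- split the integral
  have hf1ii : IntervalIntegrable (fun s => ‖deriv θ s‖ ^ 2) volume 0 t := hvint t
  have hf2ii : IntervalIntegrable f2 volume 0 t := by
    rw [intervalIntegrable_iff_integrableOn_Ioc_of_le ht.le]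
    exact hf2int.mono_set Set.Ioc_subset_Icc_self
  have hsplit : (∫ y in (0:ℝ)..t, (-‖deriv θ y‖ ^ 2 + f2 y))
      = -(∫ y in (0:ℝ)..t, ‖deriv θ y‖ ^ 2) + ∫ y in (0:ℝ)..t, f2 y := by
    have := intervalIntegral.integral_add hf1ii.neg hf2ii
    simpa using this
  -- lower bound on the velocity integral
  have hmt : m * t ≤ ∫ y in (0:ℝ)..t, ‖deriv θ y‖ ^ 2 := by
    have := intervalIntegral.integral_mono_on ht.le (intervalIntegrable_const (c := m))
      hf1ii (fun s hs => hm_le s hs)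
    simpa [mul_comm] using this
  -- set up the finite measure on (0, t]
  have hJmeas : MeasurableSet (Set.Ioc (0:ℝ) t) := measurableSet_Ioc
  set μ := volume.restrict (Set.Ioc (0:ℝ) t) with hμdef
  have hμuniv : μ Set.univ = ENNReal.ofReal t := by
    rw [hμdef, Measure.restrict_apply_univ, Real.volume_Ioc, sub_zero]
  haveI : IsFiniteMeasure μ := ⟨by rw [hμuniv]; exact ENNReal.ofReal_lt_top⟩
  haveI : NeZero μ := by
    refine ⟨fun h => ?_⟩
    have := congrArg (fun ν : Measure ℝ => ν Set.univ) h
    simp only [hμuniv, Measure.coe_zero, Pi.zero_apply] at this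
    rw [ENNReal.ofReal_eq_zero] at this
    linarith
  have hαI : Integrable α μ := by
    apply Measure.integrableOn_of_bounded (M := B) (by simp) hαmeas.aestronglyMeasurable
    filter_upwards [ae_restrict_mem hJmeas] with s hs
    rw [Real.norm_eq_abs, abs_of_nonneg (hα0 s)]; exact hB s hs.1.le
  have hαγI : Integrable (fun s => α s ^ γ) μ := hαint.mono_set Set.Ioc_subset_Ioi_self
  -- Jensen
  have hjensen : (⨍ x, α x ∂μ) ^ γ ≤ ⨍ x, (α x) ^ γ ∂μ := by
    have := (convexOn_rpow hγ).map_average_le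
      (Real.continuous_rpow_const (le_trans zero_le_one hγ)).continuousOn
      isClosed_Ici (ae_of_all _ fun x => hα0 x) hαI hαγI
    simpa using this
  have htr : (μ Set.univ).toReal = t := by rw [hμuniv, ENNReal.toReal_ofReal ht.le]
  have havg : ∀ f : ℝ → ℝ, (⨍ x, f x ∂μ) = t⁻¹ * ∫ x, f x ∂μ := by
    intro f; rw [average_eq, measureReal_def, htr, smul_eq_mul]
  set Iα := ∫ x, α x ∂μ with hIα
  have hIα0 : 0 ≤ Iα := integral_nonneg fun x => hα0 x
  have hIγ0 : 0 ≤ (∫ s in Set.Ioi (0 : ℝ), α s ^ γ) :=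
    setIntegral_nonneg measurableSet_Ioi fun x _ => Real.rpow_nonneg (hα0 x) γ
  have hA0 : 0 ≤ A := hA ▸ Real.rpow_nonneg hIγ0 _
  have hAγ : A ^ γ = ∫ s in Set.Ioi (0 : ℝ), α s ^ γ := by
    rw [hA, ← Real.rpow_mul hIγ0, one_div_mul_cancel (ne_of_gt hγ0), Real.rpow_one]
  have hIγt_le : (∫ x, α x ^ γ ∂μ) ≤ A ^ γ := by
    rw [hAγ]
    exact setIntegral_mono_set hαint
      (ae_of_all _ fun x => Real.rpow_nonneg (hα0 x) γ)
      (HasSubset.Subset.eventuallyLE Set.Ioc_subset_Ioi_self)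
  have hjensen' : (t⁻¹ * Iα) ^ γ ≤ t⁻¹ * A ^ γ := by
    rw [havg α, havg (fun x => α x ^ γ)] at hjensen
    exact hjensen.trans (mul_le_mul_of_nonneg_left hIγt_le (inv_nonneg.mpr ht.le))
  have hIα_le : Iα ≤ t * (t ^ (-(1 / γ)) * A) := by
    have e : t⁻¹ * Iα = ((t⁻¹ * Iα) ^ γ) ^ (1/γ) := by
      rw [← Real.rpow_mul (by positivity), mul_one_div_cancel (ne_of_gt hγ0), Real.rpow_one]
    have h1 : t⁻¹ * Iα ≤ (t⁻¹ * A ^ γ) ^ (1/γ) := by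
      rw [e]
      exact Real.rpow_le_rpow (by positivity) hjensen' (by positivity)
    have h2 : (t⁻¹ * A ^ γ) ^ (1/γ) = t ^ (-(1/γ)) * A := by
      rw [Real.mul_rpow (by positivity) (Real.rpow_nonneg hA0 γ),
        ← Real.rpow_mul hA0, mul_one_div_cancel (ne_of_gt hγ0), Real.rpow_one,
        Real.inv_rpow ht.le, ← Real.rpow_neg ht.le]
    rw [h2] at h1
    calc Iα = t * (t⁻¹ * Iα) := by field_simp
      _ ≤ t * (t ^ (-(1/γ)) * A) := mul_le_mul_of_nonneg_left h1 ht.le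
  -- bound the control integral
  have hf2le : (∫ y in (0:ℝ)..t, f2 y) ≤ (B + 1) * M * Iα := by
    rw [intervalIntegral.integral_of_le ht.le]
    have hpt : ∀ x ∈ Set.Ioc (0:ℝ) t, f2 x ≤ (B + 1) * M * α x := by
      intro x hx
      have h1 : α x ≤ B := hB x hx.1.le
      have h2 : 0 ≤ α x := hα0 x
      have h3 : α x * gε ≤ B * M := mul_le_mul h1 (le_max_left _ _) hgε hB0
      have h4 : c * Real.sqrt gε ≤ M := le_max_right _ _
      have h5 : α x * gε + c * Real.sqrt gε ≤ (B + 1) * M := by nlinarith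
      calc f2 x = α x * (α x * gε + c * Real.sqrt gε) := rfl
        _ ≤ α x * ((B + 1) * M) := mul_le_mul_of_nonneg_left h5 h2
        _ = (B + 1) * M * α x := by ring
    calc (∫ x in Set.Ioc (0:ℝ) t, f2 x) ≤ ∫ x in Set.Ioc (0:ℝ) t, (B + 1) * M * α x :=
          setIntegral_mono_on (hf2int.mono_set Set.Ioc_subset_Icc_self)
            (hαI.const_mul _) hJmeas hpt
      _ = (B + 1) * M * Iα := by rw [integral_const_mul]
  -- assemble
  have hFle : (⨅ x, F x) ≤ F (θ t) := ciInf_le hFbdd (θ t)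
  have hmain : m * t ≤ (F (θ 0) - ⨅ x, F x) + (M * (B + 1) * A * t ^ (-(1/γ))) * t := by
    have h6 : (B + 1) * M * Iα ≤ (B + 1) * M * (t * (t ^ (-(1/γ)) * A)) :=
      mul_le_mul_of_nonneg_left hIα_le (by positivity)
    have h7 : (B + 1) * M * (t * (t ^ (-(1/γ)) * A)) = (M * (B + 1) * A * t ^ (-(1/γ))) * t := by
      ring
    rw [hsplit] at key
    linarith
  rw [hmdef] at hmain ⊢
  calc (⨅ s : Set.Icc (0 : ℝ) t, ‖deriv θ ↑s‖ ^ 2)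
      ≤ ((F (θ 0) - ⨅ x, F x) + (M * (B + 1) * A * t ^ (-(1/γ))) * t) / t := by
        rw [le_div_iff₀ ht]; exact hmain
    _ = (F (θ 0) - ⨅ x, F x) / t + M * (B + 1) * A * t ^ (-(1 / γ)) := by
        rw [add_div, mul_div_cancel_right₀ _ (ne_of_gt ht)]
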